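/- The identity element in a unital Banach algebra is not a commutator; that is, there do not exist elements x, y of the algebra with xy - yx = 1. -/

import Mathlib

/-- **Wintner's theorem.** The identity element in a unital Banach algebra is not a
commutator: there do not exist `x y` with `x * y - y * x = 1`. -/
theorem identity_is_not_a_commutator {A : Type*} [NormedRing A] [CompleteSpace A]
    [NormedAlgebra ℝ A] [Nontrivial A] :
    ¬ ∃ x y : A, x * y - y * x = 1 := by
  rintro ⟨x, y, hxy⟩
  -- key identity
  have key : ∀ n : ℕ, x * y ^ (n + 1) - y ^ (n + 1) * x = (n + 1 : ℕ) • y ^ n := by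
    intro n
    induction n with
    | zero => simpa using hxy
    | succ n ih =>
      have h : x * y ^ (n + 2) - y ^ (n + 2) * x
          = (x * y ^ (n + 1) - y ^ (n + 1) * x) * y + y ^ (n + 1) * (x * y - y * x) := by
        have : y ^ (n + 2) = y ^ (n + 1) * y := by rw [pow_succ]
        rw [this]; noncomm_ring
      rw [h, ih, hxy, mul_one, smul_mul_assoc, ← pow_succ,
        succ_nsmul (y ^ (n + 1)) (n + 1)]
  -- norm bound forces y^n = 0 for large n
  obtain ⟨n, hn⟩ : ∃ n : ℕ, 2 * ‖x‖ * ‖y‖ < (n + 1 : ℝ) := by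
    obtain ⟨n, hn⟩ := exists_nat_gt (2 * ‖x‖ * ‖y‖)
    exact ⟨n, by push_cast; linarith⟩
  have hyn : y ^ n = 0 := by
    by_contra h
    have hpos : 0 < ‖y ^ n‖ := norm_pos_iff.mpr h
    have h1 : (n + 1 : ℝ) * ‖y ^ n‖ = ‖x * y ^ (n + 1) - y ^ (n + 1) * x‖ := by
      rw [key n, ← Nat.cast_smul_eq_nsmul ℝ, norm_smul]
      rw [Real.norm_eq_abs, Nat.abs_cast]
      push_cast
      ring
    have hy1 : ‖y ^ (n + 1)‖ ≤ ‖y‖ * ‖y ^ n‖ := by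
      rw [pow_succ']; exact norm_mul_le _ _
    have h2 : ‖x * y ^ (n + 1) - y ^ (n + 1) * x‖ ≤ 2 * ‖x‖ * ‖y‖ * ‖y ^ n‖ := by
      have ha : ‖x * y ^ (n + 1)‖ ≤ ‖x‖ * ‖y ^ (n + 1)‖ := norm_mul_le _ _
      have hb : ‖y ^ (n + 1) * x‖ ≤ ‖y ^ (n + 1)‖ * ‖x‖ := norm_mul_le _ _
      have hc := norm_sub_le (x * y ^ (n + 1)) (y ^ (n + 1) * x)
      nlinarith [norm_nonneg x, norm_nonneg (y ^ (n + 1))]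
    nlinarith
  -- downward induction
  have down : ∀ m : ℕ, y ^ m = 0 → y ^ 0 = 0 := by
    intro m
    induction m with
    | zero => exact id
    | succ m ih =>
      intro h
      apply ih
      have h0 := key m
      rw [h, mul_zero, zero_mul, sub_zero] at h0
      have h2 : ((m + 1 : ℕ) : ℝ) • y ^ m = 0 := by
        rw [Nat.cast_smul_eq_nsmul ℝ, ← h0]
      have h3 : ((m + 1 : ℕ) : ℝ) ≠ 0 := by positivity
      exact (smul_eq_zero.mp h2).resolve_left h3
  have : (1 : A) = 0 := by simpa using down n hyn
  exact one_ne_zero this
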